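/- Let X_1, …, X_n be i.i.d. integer-valued random variables and S_k := X_1 + ⋯ + X_k. Then for every integer n ≥ 1 and every integer y ≥ 1: P(S_k > 0 for all 1 ≤ k ≤ n, and S_n = y) ≤ (y/n)·P(S_n = y). -/

import Mathlib

open MeasureTheory ProbabilityTheory
open Fin.NatCast

lemma cycle_count (n : ℕ) (npos : 0 < n) (f : ℕ → ℤ) (hper : ∀ i, f (i + n) = f i)
    (y : ℕ) (hS : ∑ i ∈ Finset.range n, f i = (y : ℤ))
    [DecidablePred (fun j => ∀ k, 1 ≤ k → k ≤ n → 0 < ∑ i ∈ Finset.range k, f (j + i))] :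
    ((Finset.range n).filter
      (fun j => ∀ k, 1 ≤ k → k ≤ n → 0 < ∑ i ∈ Finset.range k, f (j + i))).card ≤ y := by
  set T : ℕ → ℤ := fun m => ∑ i ∈ Finset.range m, f i with hT
  have hwin : ∀ m, ∑ i ∈ Finset.range n, f (m + i) = (y : ℤ) := by
    intro m
    induction m with
    | zero => simpa using hS
    | succ m ih =>
      have e1 := Finset.sum_range_succ' (fun i => f (m + i)) n
      have e2 := Finset.sum_range_succ (fun i => f (m + i)) n
      have e3 : f (m + n) = f (m + 0) := by simpa using hper m
      have h1 : ∑ i ∈ Finset.range n, f (m + 1 + i) = ∑ i ∈ Finset.range n, f (m + (i + 1)) := by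
        refine Finset.sum_congr rfl fun i _ => ?_
        congr 1; omega
      rw [h1]
      omega
  have hTadd : ∀ j k, T (j + k) = T j + ∑ i ∈ Finset.range k, f (j + i) :=
    fun j k => Finset.sum_range_add f j k
  set G := (Finset.range n).filter
      (fun j => ∀ k, 1 ≤ k → k ≤ n → 0 < ∑ i ∈ Finset.range k, f (j + i)) with hG
  rcases G.eq_empty_or_nonempty with h | hne
  · simp [h]
  have key : ∀ j ∈ G, ∀ j' ∈ G, j < j' → T j < T j' ∧ T j' < T j + y := by
    intro j hj j' hj' hlt
    simp only [hG, Finset.mem_filter, Finset.mem_range] at hj hj'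
    obtain ⟨hjn, hjg⟩ := hj
    obtain ⟨hj'n, hj'g⟩ := hj'
    constructor
    · have h1 := hjg (j' - j) (by omega) (by omega)
      have h2 := hTadd j (j' - j)
      have h3 : j + (j' - j) = j' := by omega
      rw [h3] at h2
      omega
    · have h1 := hj'g (j + n - j') (by omega) (by omega)
      have h2 := hTadd j' (j + n - j')
      have h3 : j' + (j + n - j') = j + n := by omega
      have h4 := hTadd j n
      have h5 := hwin j
      rw [h3] at h2
      omega
  set m0 := G.min' hne with hm0
  have hm0G : m0 ∈ G := G.min'_mem hne
  have hypos : (0:ℤ) < (y:ℤ) := by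
    have := (Finset.mem_filter.mp hm0G).2 n (by omega) le_rfl
    rw [hwin m0] at this
    exact this
  have hsub : ∀ j ∈ G, T j ∈ Finset.Ico (T m0) (T m0 + (y:ℤ)) := by
    intro j hj
    rcases eq_or_lt_of_le (G.min'_le j hj) with h | h
    · rw [← h, ← hm0]; simp [Finset.mem_Ico]; omega
    · have := key m0 hm0G j hj h
      simp [Finset.mem_Ico]; omega
  have hinj : Set.InjOn T G := by
    intro a ha b hb hab
    rcases lt_trichotomy a b with h | h | h
    · exact absurd hab (ne_of_lt (key a ha b hb h).1)
    · exact h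
    · exact absurd hab.symm (ne_of_lt (key b hb a ha h).1)
  calc G.card = (G.image T).card := (Finset.card_image_of_injOn hinj).symm
    _ ≤ (Finset.Ico (T m0) (T m0 + (y:ℤ))).card := by
        refine Finset.card_le_card ?_
        intro t ht
        obtain ⟨j, hj, rfl⟩ := Finset.mem_image.mp ht
        exact hsub j hj
    _ = y := by rw [Int.card_Ico]; omega

section aux
variable {Ω : Type*} [MeasurableSpace Ω] (μ : Measure Ω) [IsProbabilityMeasure μ]

lemma map_eq_pi (X : ℕ → Ω → ℤ) (hmeas : ∀ i, Measurable (X i))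
    (hindep : iIndepFun X μ)
    (hident : ∀ i, IdentDistrib (X i) (X 0) μ μ) (n : ℕ) :
    μ.map (fun ω (i : Fin n) => X i ω) = Measure.pi (fun _ : Fin n => μ.map (X 0)) := by
  classical
  have hY : Measurable (fun ω (i : Fin n) => X i ω) :=
    measurable_pi_lambda _ fun i => hmeas i
  have hXmap : ∀ (i : ℕ) (t : Set ℤ), μ (X i ⁻¹' t) = μ.map (X 0) t := by
    intro i t
    rw [← (hident i).map_eq, Measure.map_apply (hmeas i) .of_discrete]
  refine (Measure.pi_eq fun s _ => ?_).symm
  rw [Measure.map_apply hY (MeasurableSet.univ_pi fun i => .of_discrete)]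
  have hpre : (fun ω (i : Fin n) => X i ω) ⁻¹' Set.pi Set.univ s =
      ⋂ i ∈ Finset.range n, X i ⁻¹' (if h : i < n then s ⟨i, h⟩ else Set.univ) := by
    ext ω
    simp only [Set.mem_preimage, Set.mem_pi, Set.mem_univ, true_implies, Set.mem_iInter,
      Finset.mem_range]
    constructor
    · intro h i hi; rw [dif_pos hi]; exact h ⟨i, hi⟩
    · intro h i; have := h i.1 i.2; rwa [dif_pos i.2] at this
  rw [hpre, hindep.measure_inter_preimage_eq_mul _ (fun i _ => .of_discrete)]
  rw [← Fin.prod_univ_eq_prod_range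
      (fun i => μ (X i ⁻¹' (if h : i < n then s ⟨i, h⟩ else Set.univ)))]
  refine Finset.prod_congr rfl fun i _ => ?_
  rw [dif_pos i.2, hXmap]

lemma pi_shift_invariant (ν : Measure ℤ) [IsProbabilityMeasure ν] (n : ℕ) (e : Fin n ≃ Fin n) :
    (Measure.pi (fun _ : Fin n => ν)).map (fun v : Fin n → ℤ => v ∘ e) =
      Measure.pi (fun _ : Fin n => ν) := by
  have hm : Measurable (fun v : Fin n → ℤ => v ∘ e) :=
    measurable_pi_lambda _ fun i => measurable_pi_apply _
  refine (Measure.pi_eq fun s _ => ?_).symm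
  rw [Measure.map_apply hm (MeasurableSet.univ_pi fun i => .of_discrete)]
  have hpre : (fun v : Fin n → ℤ => v ∘ e) ⁻¹' Set.pi Set.univ s =
      Set.pi Set.univ (fun i => s (e.symm i)) := by
    ext v
    simp only [Set.mem_preimage, Set.mem_pi, Set.mem_univ, true_implies, Function.comp]
    constructor
    · intro h i; have := h (e.symm i); simpa using this
    · intro h i; have := h (e i); simpa using this
  rw [hpre, Measure.pi_pi]
  exact Equiv.prod_comp e.symm (fun i => ν (s i))

end aux

/-- if `X_1, X_2, …` are i.i.d. integer-valued random variables with
partial sums `S_k = X_1 + ⋯ + X_k`, then for every `n ≥ 1` and every integer `y ≥ 1`,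
`P(S_k > 0 for all 1 ≤ k ≤ n, S_n = y) ≤ (y/n)·P(S_n = y)`. -/
theorem strict_ladder_bound {Ω : Type*} [MeasurableSpace Ω] (μ : Measure Ω)
    [IsProbabilityMeasure μ] (X : ℕ → Ω → ℤ) (hmeas : ∀ i, Measurable (X i))
    (hindep : iIndepFun X μ)
    (hident : ∀ i, IdentDistrib (X i) (X 0) μ μ)
    (n : ℕ) (hn : 1 ≤ n) (y : ℕ) (hy : 1 ≤ y) :
    μ {ω | (∀ k, 1 ≤ k → k ≤ n → 0 < ∑ i ∈ Finset.range k, X i ω) ∧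
        (∑ i ∈ Finset.range n, X i ω) = (y : ℤ)}
      ≤ ((y : ENNReal) / (n : ENNReal)) *
        μ {ω | (∑ i ∈ Finset.range n, X i ω) = (y : ℤ)} := by
  classical
  haveI : NeZero n := ⟨by omega⟩
  set ν : Measure ℤ := μ.map (X 0) with hν
  haveI : IsProbabilityMeasure ν := Measure.isProbabilityMeasure_map (hmeas 0).aemeasurable
  set A : Set (Fin n → ℤ) :=
    {v | (∀ k, 1 ≤ k → k ≤ n → 0 < ∑ i ∈ Finset.range k, v (i : Fin n)) ∧
      (∑ i, v i) = (y : ℤ)} with hA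
  have hmeasA : MeasurableSet A := .of_discrete
  set W : ℕ → Ω → (Fin n → ℤ) := fun j ω i => X (((j : ℕ) : Fin n) + i : Fin n).val ω with hW
  have hWm : ∀ j, Measurable (W j) := fun j => measurable_pi_lambda _ fun i => hmeas _
  set B : Set Ω := {ω | (∑ i ∈ Finset.range n, X i ω) = (y : ℤ)} with hB
  have hSmeas : Measurable (fun ω => ∑ i ∈ Finset.range n, X i ω) :=
    Finset.measurable_sum _ fun i _ => hmeas i
  have hBm : MeasurableSet B := hSmeas (MeasurableSet.of_discrete (s := {(y : ℤ)}))
  -- identification of the preimage events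
  have hsum2 : ∀ (j : ℕ) (ω : Ω),
      (∑ i : Fin n, X ((((j : ℕ) : Fin n) + i : Fin n) : ℕ) ω) = ∑ i ∈ Finset.range n, X i ω := by
    intro j ω
    have h1 := Equiv.sum_comp (Equiv.addLeft ((j : ℕ) : Fin n)) (fun i : Fin n => X i.val ω)
    simp only [Equiv.coe_addLeft] at h1
    rw [h1, Fin.sum_univ_eq_sum_range (fun i => X i ω)]
  have hWpre : ∀ j, W j ⁻¹' A =
      {ω | (∀ k, 1 ≤ k → k ≤ n → 0 < ∑ i ∈ Finset.range k, X ((j + i) % n) ω) ∧ ω ∈ B} := by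
    intro j
    ext ω
    simp only [Set.mem_preimage, hA, Set.mem_setOf_eq, hW, hB]
    have hval : ∀ i : ℕ, ((((j : ℕ) : Fin n) + ((i : ℕ) : Fin n) : Fin n) : ℕ) = (j + i) % n := by
      intro i
      rw [Fin.val_add, Fin.val_natCast, Fin.val_natCast]
      conv_rhs => rw [Nat.add_mod]
    constructor
    · rintro ⟨h1, h2⟩
      refine ⟨fun k hk1 hk2 => ?_, by rw [← hsum2 j ω]; exact h2⟩
      have := h1 k hk1 hk2
      calc (0:ℤ) < ∑ i ∈ Finset.range k, X (((j : ℕ) : Fin n) + ((i : ℕ) : Fin n) : Fin n).val ω := this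
        _ = ∑ i ∈ Finset.range k, X ((j + i) % n) ω :=
            Finset.sum_congr rfl fun i _ => by rw [hval i]
    · rintro ⟨h1, h2⟩
      refine ⟨fun k hk1 hk2 => ?_, by rw [hsum2 j ω]; exact h2⟩
      have := h1 k hk1 hk2
      calc (0:ℤ) < ∑ i ∈ Finset.range k, X ((j + i) % n) ω := this
        _ = ∑ i ∈ Finset.range k, X (((j : ℕ) : Fin n) + ((i : ℕ) : Fin n) : Fin n).val ω :=
            Finset.sum_congr rfl fun i _ => by rw [hval i]
  -- distribution of each W j
  have hWmap : ∀ j : ℕ, μ.map (W j) = Measure.pi (fun _ : Fin n => ν) := by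
    intro j
    have hYm : Measurable (fun ω (i : Fin n) => X i ω) :=
      measurable_pi_lambda _ fun i => hmeas i
    have hcomp : W j = (fun v : Fin n → ℤ => v ∘ (Equiv.addLeft ((j : ℕ) : Fin n))) ∘
        (fun ω (i : Fin n) => X i ω) := rfl
    have hm2 : Measurable (fun v : Fin n → ℤ => v ∘ (Equiv.addLeft ((j : ℕ) : Fin n))) :=
      measurable_pi_lambda _ fun i => measurable_pi_apply _
    rw [hcomp, ← Measure.map_map hm2 hYm, map_eq_pi μ X hmeas hindep hident n,
      pi_shift_invariant]
  have hEμ : ∀ j : ℕ, μ (W j ⁻¹' A) = Measure.pi (fun _ : Fin n => ν) A := by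
    intro j
    rw [← Measure.map_apply (hWm j) hmeasA, hWmap j]
  -- the LHS event is W 0 ⁻¹' A
  have hL : {ω | (∀ k, 1 ≤ k → k ≤ n → 0 < ∑ i ∈ Finset.range k, X i ω) ∧
      (∑ i ∈ Finset.range n, X i ω) = (y : ℤ)} = W 0 ⁻¹' A := by
    rw [hWpre 0]
    ext ω
    simp only [Set.mem_setOf_eq, hB, Nat.zero_add]
    have hs : ∀ k, k ≤ n → ∑ i ∈ Finset.range k, X (i % n) ω
        = ∑ i ∈ Finset.range k, X i ω := by
      intro k hk
      refine Finset.sum_congr rfl fun i hi => ?_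
      have := Finset.mem_range.mp hi
      congr 1
      exact Nat.mod_eq_of_lt (by omega)
    constructor
    · rintro ⟨h1, h2⟩
      exact ⟨fun k hk1 hk2 => by rw [hs k hk2]; exact h1 k hk1 hk2, h2⟩
    · rintro ⟨h1, h2⟩
      exact ⟨fun k hk1 hk2 => by rw [← hs k hk2]; exact h1 k hk1 hk2, h2⟩
  -- integral comparison
  have hsum : (n : ENNReal) * (Measure.pi (fun _ : Fin n => ν) A) ≤ (y : ENNReal) * μ B := by
    calc (n : ENNReal) * (Measure.pi (fun _ : Fin n => ν) A)
        = ∑ _j ∈ Finset.range n, Measure.pi (fun _ : Fin n => ν) A := by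
          rw [Finset.sum_const, Finset.card_range, nsmul_eq_mul]
      _ = ∑ j ∈ Finset.range n, μ (W j ⁻¹' A) := Finset.sum_congr rfl fun j _ => (hEμ j).symm
      _ = ∑ j ∈ Finset.range n,
          ∫⁻ ω, (W j ⁻¹' A).indicator (fun _ => (1 : ENNReal)) ω ∂μ :=
            Finset.sum_congr rfl fun j _ => (lintegral_indicator_one ((hWm j) hmeasA)).symm
      _ = ∫⁻ ω, ∑ j ∈ Finset.range n, (W j ⁻¹' A).indicator (fun _ => (1 : ENNReal)) ω ∂μ :=
            (lintegral_finset_sum _ fun j _ =>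
              measurable_const.indicator ((hWm j) hmeasA)).symm
      _ ≤ ∫⁻ ω, (y : ENNReal) * B.indicator (fun _ => (1 : ENNReal)) ω ∂μ := by
          refine lintegral_mono fun ω => ?_
          by_cases hω : ω ∈ B
          · rw [Set.indicator_of_mem hω, mul_one]
            have hSf : ∑ i ∈ Finset.range n, X (i % n) ω = (y : ℤ) := by
              have he : ∑ i ∈ Finset.range n, X (i % n) ω = ∑ i ∈ Finset.range n, X i ω :=
                Finset.sum_congr rfl fun i hi => by
                  congr 1; exact Nat.mod_eq_of_lt (Finset.mem_range.mp hi)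
              rw [he]; exact hω
            have h1 : ∀ j ∈ Finset.range n,
                (W j ⁻¹' A).indicator (fun _ => (1 : ENNReal)) ω
                ≤ (if (∀ k, 1 ≤ k → k ≤ n →
                    0 < ∑ i ∈ Finset.range k, (fun i => X (i % n) ω) (j + i))
                  then (1 : ENNReal) else 0) := by
              intro j _
              by_cases hg : (∀ k, 1 ≤ k → k ≤ n →
                  0 < ∑ i ∈ Finset.range k, (fun i => X (i % n) ω) (j + i))
              · rw [if_pos hg]
                by_cases hm : ω ∈ W j ⁻¹' A
                · rw [Set.indicator_of_mem hm]
                · rw [Set.indicator_of_notMem hm]; exact zero_le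
              · have hnot : ω ∉ W j ⁻¹' A := by
                  rw [hWpre j]; exact fun hc => hg hc.1
                rw [if_neg hg, Set.indicator_of_notMem hnot]
            calc ∑ j ∈ Finset.range n, (W j ⁻¹' A).indicator (fun _ => (1 : ENNReal)) ω
                ≤ ∑ j ∈ Finset.range n, (if (∀ k, 1 ≤ k → k ≤ n →
                    0 < ∑ i ∈ Finset.range k, (fun i => X (i % n) ω) (j + i))
                  then (1 : ENNReal) else 0) := Finset.sum_le_sum h1
              _ = (((Finset.range n).filter (fun j => ∀ k, 1 ≤ k → k ≤ n →
                    0 < ∑ i ∈ Finset.range k, (fun i => X (i % n) ω) (j + i))).card :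
                      ENNReal) := by
                    simp only [Finset.sum_boole]
              _ ≤ (y : ENNReal) := by
                  exact_mod_cast cycle_count n (by omega) (fun i => X (i % n) ω)
                    (fun i => by simp [Nat.add_mod_right]) y hSf
          · have hzero : ∀ j ∈ Finset.range n,
                (W j ⁻¹' A).indicator (fun _ => (1 : ENNReal)) ω = 0 := by
              intro j _
              refine Set.indicator_of_notMem (fun hc => hω ?_) _
              rw [hWpre j] at hc
              exact hc.2
            rw [Finset.sum_eq_zero hzero]
            exact zero_le
      _ = (y : ENNReal) * μ B := by
          rw [lintegral_const_mul _ (measurable_const.indicator hBm)]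
          congr 1
          exact lintegral_indicator_one hBm
  -- conclude
  rw [hL, hEμ 0]
  rw [hB] at hsum
  have hn0 : (n : ENNReal) ≠ 0 := Nat.cast_ne_zero.mpr (by omega)
  have hnt : (n : ENNReal) ≠ ⊤ := ENNReal.natCast_ne_top n
  rw [ENNReal.div_eq_inv_mul, mul_assoc, ← ENNReal.div_eq_inv_mul,
    ENNReal.le_div_iff_mul_le (Or.inl hn0) (Or.inl hnt), mul_comm]
  exact hsum
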